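/- Every bridgeless chordal graph G has an orientation D such that the only dual 4-flow φ: E → Z_4 with φ(e) ∈ {0,3} for all arcs e is the identically zero map. -/

import Mathlib

/-- A dual `p`-flow: signed sum along every closed walk (hence every circuit) vanishes. -/
def IsDualFlow {V E : Type} (p : ℕ) (tl hd : E → V) (φ : E → ZMod p) : Prop :=
  ∀ (n : ℕ) (v : Fin (n + 1) → V) (e : Fin n → E) (σ : Fin n → Bool),
    v 0 = v (Fin.last n) →
    (∀ i : Fin n,
      (σ i = true → tl (e i) = v i.castSucc ∧ hd (e i) = v i.succ) ∧
      (σ i = false → hd (e i) = v i.castSucc ∧ tl (e i) = v i.succ)) →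
    (∑ i : Fin n, if σ i then φ (e i) else -φ (e i)) = 0

/-- A simple graph is chordal (triangulated) if every cycle of length at least 4
has a chord. -/
def IsChordal {V : Type} (G : SimpleGraph V) : Prop :=
  ∀ ⦃v : V⦄ (w : G.Walk v v), w.IsCycle → 4 ≤ w.length →
    ∃ u x : V, u ∈ w.support ∧ x ∈ w.support ∧ G.Adj u x ∧ s(u, x) ∉ w.edges

open SimpleGraph Walk

namespace ChordalRigid

variable {V : Type}

section WalkHelpers
variable {G : SimpleGraph V}



lemma sym2_exists_pair (z : Sym2 V) : ∃ p : V × V, z = s(p.1, p.2) := by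
  induction z using Sym2.ind with
  | _ x y => exact ⟨(x, y), rfl⟩

noncomputable def defaultOrient (G : SimpleGraph V) (e : G.edgeSet) : V × V :=
  Classical.choose (sym2_exists_pair (e : Sym2 V))

lemma defaultOrient_spec (G : SimpleGraph V) (e : G.edgeSet) :
    (e : Sym2 V) = s((defaultOrient G e).1, (defaultOrient G e).2) :=
  Classical.choose_spec (sym2_exists_pair (e : Sym2 V))

variable {G : SimpleGraph V}

lemma edges_of_length_one {u v : V} {w : G.Walk u v} (h : w.length = 1) :
    w.edges = [s(u, v)] := by
  cases w with
  | nil => simp at h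
  | cons hadj w' =>
    cases w' with
    | nil => simp
    | cons _ _ => simp [SimpleGraph.Walk.length_cons] at h

lemma triangle_of_length_three {c p q : V} (w : G.Walk c c) (h3 : w.length = 3)
    (hpq : s(p, q) ∈ w.edges) : ∃ r, r ∈ w.support ∧ G.Adj p r ∧ G.Adj r q := by
  cases w with
  | nil => simp at h3
  | cons h1 w1 =>
    cases w1 with
    | nil => simp at h3
    | cons h2 w2 =>
      cases w2 with
      | nil => simp at h3
      | cons h3' w3 =>
        cases w3 with
        | cons _ _ => simp [SimpleGraph.Walk.length_cons] at h3
        | nil =>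
          simp only [SimpleGraph.Walk.edges_cons, SimpleGraph.Walk.edges_nil,
            List.mem_cons, List.not_mem_nil, or_false] at hpq
          have hsupp : ∀ z, z ∈ (SimpleGraph.Walk.cons h1
              (SimpleGraph.Walk.cons h2 (SimpleGraph.Walk.cons h3' SimpleGraph.Walk.nil))).support
              ↔ _ := fun z => Iff.rfl
          rcases hpq with h | h | h <;> rw [Sym2.eq_iff] at h <;>
            rcases h with ⟨rfl, rfl⟩ | ⟨rfl, rfl⟩
          · exact ⟨_, by simp, h3'.symm, h2.symm⟩
          · exact ⟨_, by simp, h2, h3'⟩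
          · exact ⟨_, by simp, h1.symm, h3'.symm⟩
          · exact ⟨_, by simp, h3', h1⟩
          · exact ⟨_, by simp, h2.symm, h1.symm⟩
          · exact ⟨_, by simp, h1, h2⟩




lemma paths_of_split [DecidableEq V] {u x : V} {R : G.Walk u u} (hR : R.IsCycle)
    (hx : x ∈ R.support) (hxu : x ≠ u) :
    (R.takeUntil x hx).IsPath ∧ (R.dropUntil x hx).IsPath := by
  have hspec := R.take_spec hx
  set P1 := R.takeUntil x hx with hP1
  set P2 := R.dropUntil x hx with hP2
  have hsupp : P1.support ++ P2.support.tail = R.support := by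
    rw [← Walk.support_append, hspec]
  have hT : R.support.tail.Nodup := ((Walk.isCycle_def _).mp hR).2.2
  have h1 : P1.support = u :: P1.support.tail := Walk.support_eq_cons _
  have h2 : P2.support = x :: P2.support.tail := Walk.support_eq_cons _
  have hRs : R.support = u :: R.support.tail := Walk.support_eq_cons _
  have htails : P1.support.tail ++ P2.support.tail = R.support.tail := by
    have := hsupp
    rw [h1, hRs, List.cons_append] at this
    exact (List.cons.inj this).2
  rw [← htails, List.nodup_append] at hT
  obtain ⟨ht1, ht2, hdisj⟩ := hT
  have huP2 : u ∈ P2.support.tail := by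
    have : u ∈ P2.support := Walk.end_mem_support _
    rw [h2] at this
    rcases List.mem_cons.mp this with h | h
    · exact absurd h.symm hxu
    · exact h
  have hxP1 : x ∈ P1.support.tail := by
    have : x ∈ P1.support := Walk.end_mem_support _
    rw [h1] at this
    rcases List.mem_cons.mp this with h | h
    · exact absurd h hxu
    · exact h
  constructor
  · rw [Walk.isPath_def, h1, List.nodup_cons]
    exact ⟨fun hu => hdisj u hu u huP2 rfl, ht1⟩
  · rw [Walk.isPath_def, h2, List.nodup_cons]
    exact ⟨fun hxx => hdisj x hxP1 x hxx rfl, ht2⟩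

lemma cycle_split {c u x : V} {D : G.Walk c c} (hD : D.IsCycle) (hadj : G.Adj u x)
    (hu : u ∈ D.support) (hx : x ∈ D.support) (hchord : s(u, x) ∉ D.edges)
    {f : Sym2 V} (hf : f ∈ D.edges) :
    ∃ D' : G.Walk u u, D'.IsCycle ∧ f ∈ D'.edges ∧ D'.length < D.length ∧
      ∀ z ∈ D'.support, z ∈ D.support := by
  classical
  set R := D.rotate _ hu with hRdef
  have hRc : R.IsCycle := hD.rotate hu
  have hRsup : ∀ z, z ∈ R.support ↔ z ∈ D.support := by
    intro z
    constructor
    · intro hz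
      rw [hRdef, Walk.rotate, Walk.mem_support_append_iff] at hz
      rw [← D.take_spec hu, Walk.mem_support_append_iff]
      tauto
    · intro hz
      rw [hRdef, Walk.rotate, Walk.mem_support_append_iff]
      rw [← D.take_spec hu, Walk.mem_support_append_iff] at hz
      tauto
  have hRedge : ∀ z, z ∈ R.edges ↔ z ∈ D.edges := fun z => (D.rotate_edges _ hu).mem_iff
  have hRlen : R.length = D.length := by
    have := (D.rotate_darts _ hu).perm.length_eq
    simpa only [Walk.length_darts] using this
  have hxR : x ∈ R.support := (hRsup x).mpr hx
  have hxu : x ≠ u := hadj.ne.symm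
  obtain ⟨hp1, hp2⟩ := paths_of_split hRc hxR hxu
  set P1 := R.takeUntil x hxR with hP1d
  set P2 := R.dropUntil x hxR with hP2d
  have hlen : P1.length + P2.length = R.length := by
    rw [← Walk.length_append, R.take_spec hxR]
  have hfR : f ∈ P1.edges ∨ f ∈ P2.edges := by
    have : f ∈ R.edges := (hRedge f).mpr hf
    rw [← R.take_spec hxR, Walk.edges_append, List.mem_append] at this
    exact this
  have hchR1 : s(u, x) ∉ P1.edges := fun h => hchord ((hRedge _).mp (R.edges_takeUntil_subset hxR h))
  have hchR2 : s(u, x) ∉ P2.edges := fun h => hchord ((hRedge _).mp (R.edges_dropUntil_subset hxR h))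
  have hlen1 : 2 ≤ P1.length := by
    rcases Nat.lt_or_ge P1.length 2 with h | h
    · interval_cases hl : P1.length
      · exact absurd (Walk.eq_of_length_eq_zero hl) hadj.ne
      · exact absurd (by rw [edges_of_length_one hl]; exact List.mem_singleton_self _) hchR1
    · exact h
  have hlen2 : 2 ≤ P2.length := by
    rcases Nat.lt_or_ge P2.length 2 with h | h
    · interval_cases hl : P2.length
      · exact absurd (Walk.eq_of_length_eq_zero hl).symm hadj.ne
      · refine absurd ?_ hchR2
        have hsw : s(u, x) = s(x, u) := Sym2.eq_swap
        rw [hsw, edges_of_length_one hl]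
        exact List.mem_singleton_self _
    · exact h
  have hsubsupp : ∀ z ∈ P1.support, z ∈ D.support := fun z hz =>
    (hRsup z).mp (R.support_takeUntil_subset hxR hz)
  have hsubsupp2 : ∀ z ∈ P2.support, z ∈ D.support := fun z hz =>
    (hRsup z).mp (R.support_dropUntil_subset hxR hz)
  rcases hfR with hfP | hfP
  · refine ⟨Walk.cons hadj P1.reverse, ?_, ?_, ?_, ?_⟩
    · rw [Walk.cons_isCycle_iff]
      refine ⟨hp1.reverse, ?_⟩
      rw [Walk.edges_reverse, List.mem_reverse]
      exact hchR1
    · rw [Walk.edges_cons, Walk.edges_reverse]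
      exact List.mem_cons_of_mem _ (List.mem_reverse.mpr hfP)
    · rw [Walk.length_cons, Walk.length_reverse]
      omega
    · intro z hz
      rw [Walk.support_cons] at hz
      rcases List.mem_cons.mp hz with hz | hz
      · exact hz ▸ hu
      · exact hsubsupp z (by rwa [Walk.support_reverse, List.mem_reverse] at hz)
  · refine ⟨Walk.cons hadj P2, ?_, ?_, ?_, ?_⟩
    · rw [Walk.cons_isCycle_iff]
      exact ⟨hp2, hchR2⟩
    · rw [Walk.edges_cons]
      exact List.mem_cons_of_mem _ hfP
    · rw [Walk.length_cons]
      omega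
    · intro z hz
      rw [Walk.support_cons] at hz
      rcases List.mem_cons.mp hz with hz | hz
      · exact hz ▸ hu
      · exact hsubsupp2 z hz




lemma edges_of_length_one2 {u v : V} {w : G.Walk u v} (h : w.length = 1) :
    w.edges = [s(u, v)] := by
  cases w with
  | nil => simp at h
  | cons hadj w' =>
    cases w' with
    | nil => simp
    | cons _ _ => simp [SimpleGraph.Walk.length_cons] at h

lemma exists_min_walk {p q : V} (h : G.Reachable p q) :
    ∃ w : G.Walk p q, w.IsPath ∧ ∀ w' : G.Walk p q, w.length ≤ w'.length := by
  classical
  have hne : ∃ n, ∃ w : G.Walk p q, w.length = n := ⟨_, h.some, rfl⟩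
  obtain ⟨w0, hw0⟩ := Nat.find_spec hne
  refine ⟨w0.bypass, Walk.bypass_isPath w0, fun w' => ?_⟩
  calc w0.bypass.length ≤ w0.length := Walk.length_bypass_le w0
    _ = Nat.find hne := hw0
    _ ≤ w'.length := Nat.find_min' hne ⟨w', rfl⟩

lemma min_walk_chord_start [DecidableEq V] {p q x : V} (w : G.Walk p q)
    (hmin : ∀ w' : G.Walk p q, w.length ≤ w'.length)
    (hx : x ∈ w.support) (hadj : G.Adj p x) : s(p, x) ∈ w.edges := by
  have hlen : (w.takeUntil x hx).length + (w.dropUntil x hx).length = w.length := by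
    rw [← Walk.length_append, w.take_spec hx]
  have h0 : (w.takeUntil x hx).length ≠ 0 := fun h =>
    hadj.ne (Walk.eq_of_length_eq_zero h)
  rcases Nat.lt_or_ge (w.takeUntil x hx).length 2 with hlt | hge
  · have h1 : (w.takeUntil x hx).length = 1 := by omega
    have h2 : s(p, x) ∈ (w.takeUntil x hx).edges := by
      rw [edges_of_length_one2 h1]; exact List.mem_singleton_self _
    exact w.edges_takeUntil_subset hx h2
  · exfalso
    have hW' := hmin (Walk.cons hadj (w.dropUntil x hx))
    rw [Walk.length_cons] at hW'
    omega

lemma min_walk_chord [DecidableEq V] :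
    ∀ (L : ℕ) {p q : V} (w : G.Walk p q), w.length = L →
      (∀ w' : G.Walk p q, w.length ≤ w'.length) →
      ∀ {u x : V}, u ∈ w.support → x ∈ w.support → G.Adj u x → s(u, x) ∈ w.edges := by
  intro L
  induction L using Nat.strong_induction_on with
  | _ L IH =>
    intro p q w hL hmin u x hu hx hadj
    by_cases hup : u = p
    · subst hup
      exact min_walk_chord_start w hmin hx hadj
    by_cases hxp : x = p
    · subst hxp
      rw [Sym2.eq_swap]
      exact min_walk_chord_start w hmin hu hadj.symm
    cases w with
    | nil =>
      rw [Walk.support_nil] at hu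
      exact absurd (List.mem_singleton.mp hu) hup
    | @cons _ v2 _ h w2 =>
      have hmin2 : ∀ w' : G.Walk v2 q, w2.length ≤ w'.length := by
        intro w'
        have := hmin (Walk.cons h w')
        rw [Walk.length_cons, Walk.length_cons] at this
        omega
      have hu2 : u ∈ w2.support := by
        rw [Walk.support_cons] at hu
        rcases List.mem_cons.mp hu with h' | h'
        · exact absurd h' hup
        · exact h'
      have hx2 : x ∈ w2.support := by
        rw [Walk.support_cons] at hx
        rcases List.mem_cons.mp hx with h' | h'
        · exact absurd h' hxp
        · exact h'
      have hlt : w2.length < L := by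
        rw [← hL, Walk.length_cons]; omega
      have := IH w2.length hlt w2 rfl hmin2 hu2 hx2 hadj
      rw [Walk.edges_cons]
      exact List.mem_cons_of_mem _ this


end WalkHelpers



/-- Restriction of a graph to a vertex set. -/
def Rst (H : SimpleGraph V) (A : Set V) : SimpleGraph V where
  Adj u v := H.Adj u v ∧ u ∈ A ∧ v ∈ A
  symm := ⟨fun u v ⟨h, ha, hb⟩ => ⟨h.symm, hb, ha⟩⟩
  loopless := ⟨fun u h => H.loopless.irrefl u h.1⟩

lemma Rst_le (H : SimpleGraph V) (A : Set V) : Rst H A ≤ H := fun _ _ h => h.1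

lemma Rst_mono (H : SimpleGraph V) {A B : Set V} (hAB : A ⊆ B) : Rst H A ≤ Rst H B :=
  fun _ _ h => ⟨h.1, hAB h.2.1, hAB h.2.2⟩

lemma mem_of_support {H : SimpleGraph V} {A : Set V} {p q : V} (w : (Rst H A).Walk p q)
    (hp : p ∈ A) : ∀ z ∈ w.support, z ∈ A := by
  induction w with
  | nil =>
    intro z hz
    rw [Walk.support_nil] at hz
    exact (List.mem_singleton.mp hz) ▸ hp
  | cons h w' ih =>
    intro z hz
    rw [Walk.support_cons] at hz
    rcases List.mem_cons.mp hz with hz | hz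
    · exact hz ▸ hp
    · exact ih h.2.2 z hz

lemma reach_of_walk_subset {H : SimpleGraph V} {A B : Set V} {p q : V}
    (w : (Rst H A).Walk p q) (hsub : ∀ z ∈ w.support, z ∈ B) : (Rst H B).Reachable p q := by
  induction w with
  | nil => exact Reachable.refl _
  | cons h w' ih =>
    refine (Adj.reachable ?_).trans (ih ?_)
    · exact ⟨h.1, hsub _ (Walk.start_mem_support _), hsub _ (by
        rw [Walk.support_cons]; exact List.mem_cons_of_mem _ (Walk.start_mem_support _))⟩
    · intro z hz
      exact hsub z (by rw [Walk.support_cons]; exact List.mem_cons_of_mem _ hz)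

lemma cycle_transfer {G H : SimpleGraph V} (hle : G ≤ H) {c : V} (w : G.Walk c c)
    (hw : w.IsCycle) :
    ∃ wH : H.Walk c c, wH.IsCycle ∧ wH.support = w.support ∧ wH.edges = w.edges ∧
      wH.length = w.length := by
  have hedges : ∀ e ∈ w.edges, e ∈ H.edgeSet := fun e he =>
    edgeSet_mono hle (w.edges_subset_edgeSet he)
  exact ⟨w.transfer H hedges, hw.transfer hedges, Walk.support_transfer _ hedges,
    Walk.edges_transfer _ hedges, Walk.length_transfer _ hedges⟩

lemma isChordal_Rst {H : SimpleGraph V} (hH : IsChordal H) (A : Set V) :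
    IsChordal (Rst H A) := by
  intro c w hw hlen
  obtain ⟨wH, hwH, hsupp, hedges, hlength⟩ := cycle_transfer (Rst_le H A) w hw
  obtain ⟨u, x, hu, hx, hadj, hne⟩ := hH wH hwH (by rwa [hlength])
  rw [hsupp] at hu hx
  rw [hedges] at hne
  have hmemA : ∀ z ∈ w.support, z ∈ A := by
    have hnotnil : ¬w.Nil := hw.not_nil
    have hfirst : (Rst H A).Adj c (w.getVert 1) := Walk.adj_snd hnotnil
    exact mem_of_support w hfirst.2.1
  exact ⟨u, x, hu, hx, ⟨hadj, hmemA u hu, hmemA x hx⟩, hne⟩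

lemma zsum3 : ∀ A B C : ZMod 4, (A = 0 ∨ A = 3) → (B = 0 ∨ B = 3) → (C = 0 ∨ C = 3) →
    A + B + C = 0 → A = 0 ∧ B = 0 ∧ C = 0 := by decide

lemma zsum2 : ∀ A B : ZMod 4, (A = 0 ∨ A = 3) → (B = 0 ∨ B = 3) →
    A + B = 0 → A = 0 ∧ B = 0 := by decide




section Flow
variable {H : SimpleGraph V}

/-- The edge of `H` determined by an adjacency. -/
def eEl {x y : V} (h : H.Adj x y) : H.edgeSet := ⟨s(x, y), (SimpleGraph.mem_edgeSet H).2 h⟩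

noncomputable def sflow (o : H.edgeSet → V × V) (φ : H.edgeSet → ZMod 4)
    {x y : V} (h : H.Adj x y) : ZMod 4 :=
  letI := Classical.propDecidable
  if (o (eEl h)).1 = x then φ (eEl h) else -φ (eEl h)

lemma orient_cases {o : H.edgeSet → V × V}
    (hcompat : ∀ e : H.edgeSet, (e : Sym2 V) = s((o e).1, (o e).2))
    {x y : V} (h : H.Adj x y) : o (eEl h) = (x, y) ∨ o (eEl h) = (y, x) := by
  have := hcompat (eEl h)
  rw [show ((eEl h : H.edgeSet) : Sym2 V) = s(x, y) from rfl, Sym2.eq_iff] at this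
  rcases this with ⟨h1, h2⟩ | ⟨h1, h2⟩
  · left; exact Prod.ext h1.symm h2.symm
  · right; exact Prod.ext h2.symm h1.symm

lemma sflow_eq_zero {o : H.edgeSet → V × V} {φ : H.edgeSet → ZMod 4}
    {x y : V} (h : H.Adj x y) : sflow o φ h = 0 ↔ φ (eEl h) = 0 := by
  unfold sflow
  split_ifs with h1
  · rfl
  · exact neg_eq_zero

lemma sflow_eq_of_orient {o : H.edgeSet → V × V} {φ : H.edgeSet → ZMod 4}
    {x y : V} (h : H.Adj x y) (ho : (o (eEl h)).1 = x) : sflow o φ h = φ (eEl h) := by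
  unfold sflow
  rw [if_pos ho]

lemma triangle_rel {o : H.edgeSet → V × V}
    (hcompat : ∀ e : H.edgeSet, (e : Sym2 V) = s((o e).1, (o e).2))
    {φ : H.edgeSet → ZMod 4}
    (hφ : IsDualFlow 4 (fun e => (o e).1) (fun e => (o e).2) φ)
    {x y z : V} (hxy : H.Adj x y) (hyz : H.Adj y z) (hzx : H.Adj z x) :
    sflow o φ hxy + sflow o φ hyz + sflow o φ hzx = 0 := by
  classical
  set e : Fin 3 → H.edgeSet := ![eEl hxy, eEl hyz, eEl hzx] with he
  set vt : Fin 4 → V := ![x, y, z, x] with hvt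
  set σ : Fin 3 → Bool := fun i => decide ((o (e i)).1 = vt i.castSucc) with hσ
  have key : ∀ (p q : V) (hpq : H.Adj p q),
      ((o (eEl hpq)).1 = p → (o (eEl hpq)).2 = q) ∧
      (¬(o (eEl hpq)).1 = p → (o (eEl hpq)).1 = q ∧ (o (eEl hpq)).2 = p) := by
    intro p q hpq
    rcases orient_cases hcompat hpq with h1 | h1 <;> rw [h1]
    · exact ⟨fun _ => rfl, fun hne => absurd rfl hne⟩
    · refine ⟨fun hqp => absurd hqp.symm hpq.ne, fun _ => ⟨rfl, rfl⟩⟩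
  have hcond : ∀ i : Fin 3,
      (σ i = true → (o (e i)).1 = vt i.castSucc ∧ (o (e i)).2 = vt i.succ) ∧
      (σ i = false → (o (e i)).2 = vt i.castSucc ∧ (o (e i)).1 = vt i.succ) := by
    intro i
    constructor
    · intro hi
      have hp : (o (e i)).1 = vt i.castSucc := of_decide_eq_true hi
      refine ⟨hp, ?_⟩
      fin_cases i
      · have := (key x y hxy).1 (by simpa [he, hvt] using hp)
        simpa [he, hvt] using this
      · have := (key y z hyz).1 (by simpa [he, hvt] using hp)
        simpa [he, hvt] using this
      · have := (key z x hzx).1 (by simpa [he, hvt] using hp)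
        simpa [he, hvt] using this
    · intro hi
      have hp : ¬(o (e i)).1 = vt i.castSucc := of_decide_eq_false hi
      fin_cases i
      · have := (key x y hxy).2 (by simpa [he, hvt] using hp)
        constructor
        · simpa [he, hvt] using this.2
        · simpa [he, hvt] using this.1
      · have := (key y z hyz).2 (by simpa [he, hvt] using hp)
        constructor
        · simpa [he, hvt] using this.2
        · simpa [he, hvt] using this.1
      · have := (key z x hzx).2 (by simpa [he, hvt] using hp)
        constructor
        · simpa [he, hvt] using this.2
        · simpa [he, hvt] using this.1
  have h0 : vt 0 = vt (Fin.last 3) := rfl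
  have := hφ 3 vt e σ h0 hcond
  rw [Fin.sum_univ_three] at this
  have hterm : ∀ (p q : V) (hpq : H.Adj p q) (i : Fin 3), e i = eEl hpq → vt i.castSucc = p →
      (if σ i then φ (e i) else -φ (e i)) = sflow o φ hpq := by
    intro p q hpq i hei hvi
    unfold sflow
    rw [hσ]
    simp only [hei, hvi]
    by_cases hp : (o (eEl hpq)).1 = p
    · rw [if_pos (by simpa [hp])]
      rw [if_pos hp]
    · rw [if_neg (by simpa [hp])]
      rw [if_neg hp]
  rw [hterm x y hxy 0 rfl rfl, hterm y z hyz 1 rfl rfl, hterm z x hzx 2 rfl rfl] at this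
  exact this

lemma dualflow_restrict {H H' : SimpleGraph V} (hle : H' ≤ H)
    {o : H.edgeSet → V × V} {o' : H'.edgeSet → V × V}
    (hagree : ∀ e : H'.edgeSet, o ⟨(e : Sym2 V), edgeSet_mono hle e.2⟩ = o' e)
    {φ : H.edgeSet → ZMod 4}
    (hφ : IsDualFlow 4 (fun e => (o e).1) (fun e => (o e).2) φ) :
    IsDualFlow 4 (fun e => (o' e).1) (fun e => (o' e).2)
      (fun e => φ ⟨(e : Sym2 V), edgeSet_mono hle e.2⟩) := by
  intro n v e σ h0 hcond
  refine hφ n v (fun i => ⟨((e i : H'.edgeSet) : Sym2 V), edgeSet_mono hle (e i).2⟩) σ h0 ?_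
  intro i
  simp only
  rw [hagree (e i)]
  exact hcond i


end Flow

section Dirac

variable {H : SimpleGraph V}

lemma prop_of_support {B : Set V} {P : V → Prop}
    (hclos : ∀ z y, P z → (Rst H B).Adj z y → P y)
    {p q : V} (w : (Rst H B).Walk p q) (hp : P p) : ∀ z ∈ w.support, P z := by
  induction w with
  | nil =>
    intro z hz
    rw [Walk.support_nil] at hz
    exact (List.mem_singleton.mp hz) ▸ hp
  | cons h w' ih =>
    intro z hz
    rw [Walk.support_cons] at hz
    rcases List.mem_cons.mp hz with hz | hz
    · exact hz ▸ hp
    · exact ih (hclos _ _ hp h) z hz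

lemma side_neighbor [DecidableEq V] {A S : Finset V} {a b s : V} (hs : s ∈ S) (ha : a ∈ A)
    (hnreach : ¬(Rst H ((A \ S : Finset V) : Set V)).Reachable a b)
    (w : (Rst H ((A \ S.erase s : Finset V) : Set V)).Walk a b) (hpath : w.IsPath)
    (haS : a ∉ S) :
    ∃ z, z ∈ A ∧ z ∉ S ∧ (Rst H ((A \ S : Finset V) : Set V)).Reachable a z ∧ H.Adj s z := by
  classical
  have haAS : a ∈ ((A \ S.erase s : Finset V) : Set V) := by
    rw [Finset.mem_coe, Finset.mem_sdiff]
    exact ⟨ha, fun h => haS (Finset.mem_of_mem_erase h)⟩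
  by_cases hsw : s ∈ w.support
  · have hP1 : (w.takeUntil s hsw).IsPath := hpath.takeUntil hsw
    have hQ : (w.takeUntil s hsw).reverse.IsPath := hP1.reverse
    have hsa : s ≠ a := fun h => haS (h ▸ hs)
    cases hQc : (w.takeUntil s hsw).reverse with
    | nil => exact absurd rfl hsa
    | @cons _ z _ hadj Q2 =>
      have hzA : z ∈ ((A \ S.erase s : Finset V) : Set V) := hadj.2.2
      have hzs : z ≠ s := hadj.1.ne.symm
      rw [Finset.mem_coe, Finset.mem_sdiff] at hzA
      have hzS : z ∉ S := fun hzS => hzA.2 (Finset.mem_erase.mpr ⟨hzs, hzS⟩)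
      have hsQ2 : s ∉ Q2.support := by
        have h' := hQ
        rw [hQc, Walk.cons_isPath_iff] at h'
        exact h'.2
      have hsubs : ∀ y ∈ Q2.support, y ∈ ((A \ S : Finset V) : Set V) := by
        intro y hy
        have hyA : y ∈ ((A \ S.erase s : Finset V) : Set V) :=
          mem_of_support Q2 (by rw [Finset.mem_coe, Finset.mem_sdiff]; exact hzA) y hy
        rw [Finset.mem_coe, Finset.mem_sdiff] at hyA ⊢
        refine ⟨hyA.1, fun hyS => ?_⟩
        have hys : y ≠ s := fun h => hsQ2 (h ▸ hy)
        exact hyA.2 (Finset.mem_erase.mpr ⟨hys, hyS⟩)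
      exact ⟨z, hzA.1, hzS, (reach_of_walk_subset Q2 hsubs).symm, hadj.1⟩
  · exfalso
    apply hnreach
    refine reach_of_walk_subset w ?_
    intro z hz
    have hzA : z ∈ ((A \ S.erase s : Finset V) : Set V) := mem_of_support w haAS z hz
    rw [Finset.mem_coe, Finset.mem_sdiff] at hzA ⊢
    refine ⟨hzA.1, fun hzS => ?_⟩
    have hzs : z ≠ s := fun h => hsw (h ▸ hz)
    exact hzA.2 (Finset.mem_erase.mpr ⟨hzs, hzS⟩)

lemma sep_clique (hH : IsChordal H) {B : Set V} {CaP CbP : V → Prop} {s t : V}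
    (hst : s ≠ t) (hadjst : ¬H.Adj s t)
    (hCaB : ∀ z, CaP z → z ∈ B) (hCbB : ∀ z, CbP z → z ∈ B)
    (hclosa : ∀ z y, CaP z → (Rst H B).Adj z y → CaP y)
    (hclosb : ∀ z y, CbP z → (Rst H B).Adj z y → CbP y)
    (hdisj : ∀ z, CaP z → CbP z → False)
    (hsB : s ∉ B) (htB : t ∉ B)
    {xa ya xb yb : V}
    (hxa : CaP xa) (hsxa : H.Adj s xa) (hya : CaP ya) (htya : H.Adj t ya)
    (hxb : CbP xb) (hsxb : H.Adj s xb) (hyb : CbP yb) (htyb : H.Adj t yb)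
    (hconna : (Rst H B).Reachable xa ya) (hconnb : (Rst H B).Reachable xb yb) :
    False := by
  classical
  set Ta : Set V := insert s (insert t (setOf CaP)) with hTa
  set Tb : Set V := insert s (insert t (setOf CbP)) with hTb
  have hsTa : s ∈ Ta := Set.mem_insert _ _
  have htTa : t ∈ Ta := Set.mem_insert_of_mem _ (Set.mem_insert _ _)
  have hsTb : s ∈ Tb := Set.mem_insert _ _
  have htTb : t ∈ Tb := Set.mem_insert_of_mem _ (Set.mem_insert _ _)
  have hCaTa : ∀ z, CaP z → z ∈ Ta := fun z hz =>
    Set.mem_insert_of_mem _ (Set.mem_insert_of_mem _ hz)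
  have hCbTb : ∀ z, CbP z → z ∈ Tb := fun z hz =>
    Set.mem_insert_of_mem _ (Set.mem_insert_of_mem _ hz)
  -- build a reachability s→t through the a-side
  have hra : (Rst H Ta).Reachable s t := by
    obtain ⟨wxy⟩ := hconna
    have hsupp : ∀ z ∈ wxy.support, CaP z := prop_of_support hclosa wxy hxa
    refine ((show (Rst H Ta).Adj s xa from ⟨hsxa, hsTa, hCaTa _ hxa⟩).reachable).trans
      ((reach_of_walk_subset wxy fun z hz => hCaTa z (hsupp z hz)).trans
        ((show (Rst H Ta).Adj ya t from ⟨htya.symm, hCaTa _ hya, htTa⟩).reachable))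
  have hrb : (Rst H Tb).Reachable s t := by
    obtain ⟨wxy⟩ := hconnb
    have hsupp : ∀ z ∈ wxy.support, CbP z := prop_of_support hclosb wxy hxb
    refine ((show (Rst H Tb).Adj s xb from ⟨hsxb, hsTb, hCbTb _ hxb⟩).reachable).trans
      ((reach_of_walk_subset wxy fun z hz => hCbTb z (hsupp z hz)).trans
        ((show (Rst H Tb).Adj yb t from ⟨htyb.symm, hCbTb _ hyb, htTb⟩).reachable))
  obtain ⟨Pa, hPaPath, hPamin⟩ := exists_min_walk hra
  obtain ⟨Pb, hPbPath, hPbmin⟩ := exists_min_walk hrb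
  have hPasup : ∀ z ∈ Pa.support, z ∈ Ta := mem_of_support Pa hsTa
  have hPbsup : ∀ z ∈ Pb.support, z ∈ Tb := mem_of_support Pb hsTb
  have hlen2 : ∀ {T : Set V} (P : (Rst H T).Walk s t), P.IsPath → 2 ≤ P.length := by
    intro T P hP
    rcases Nat.lt_or_ge P.length 2 with h | h
    · exfalso
      interval_cases hl : P.length
      · exact hst (Walk.eq_of_length_eq_zero hl)
      · have := edges_of_length_one2 (w := P) hl
        have hin : s(s, t) ∈ P.edges := by rw [this]; exact List.mem_singleton_self _
        exact hadjst (P.adj_of_mem_edges hin).1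
    · exact h
  have hPa2 : 2 ≤ Pa.length := hlen2 Pa hPaPath
  have hPb2 : 2 ≤ Pb.length := hlen2 Pb hPbPath
  -- transfer to H
  have hedgesa : ∀ e ∈ Pa.edges, e ∈ H.edgeSet := fun e he =>
    edgeSet_mono (Rst_le H Ta) (Pa.edges_subset_edgeSet he)
  have hedgesb : ∀ e ∈ Pb.edges, e ∈ H.edgeSet := fun e he =>
    edgeSet_mono (Rst_le H Tb) (Pb.edges_subset_edgeSet he)
  set PaH := Pa.transfer H hedgesa with hPaH
  set PbH := Pb.transfer H hedgesb with hPbH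
  have hPaHsup : PaH.support = Pa.support := Walk.support_transfer _ _
  have hPbHsup : PbH.support = Pb.support := Walk.support_transfer _ _
  have hPaHedge : PaH.edges = Pa.edges := Walk.edges_transfer _ _
  have hPbHedge : PbH.edges = Pb.edges := Walk.edges_transfer _ _
  have hPaHpath : PaH.IsPath := hPaPath.transfer hedgesa
  have hPbHpath : PbH.IsPath := hPbPath.transfer hedgesb
  set C : H.Walk s s := PaH.append PbH.reverse with hC
  -- support of C
  have hCsupp : C.support = PaH.support ++ PbH.reverse.support.tail :=
    Walk.support_append _ _
  have hPaHcons : PaH.support = s :: PaH.support.tail := Walk.support_eq_cons _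
  have hPbrcons : PbH.reverse.support = t :: PbH.reverse.support.tail :=
    Walk.support_eq_cons _
  set α := PaH.support.tail with hα
  set β := PbH.reverse.support.tail with hβ
  have hαnodup : (s :: α).Nodup := by rw [← hPaHcons]; exact hPaHpath.support_nodup
  have hβnodup : (t :: β).Nodup := by rw [← hPbrcons]; exact hPbHpath.reverse.support_nodup
  have hsα : s ∉ α := (List.nodup_cons.mp hαnodup).1
  have htβ : t ∉ β := (List.nodup_cons.mp hβnodup).1
  have hαTa : ∀ z ∈ α, z ∈ Ta := fun z hz =>
    hPasup z (by rw [← hPaHsup, hPaHcons]; exact List.mem_cons_of_mem _ hz)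
  have hβTb : ∀ z ∈ β, z ∈ Tb := fun z hz => by
    have : z ∈ PbH.reverse.support := by rw [hPbrcons]; exact List.mem_cons_of_mem _ hz
    rw [Walk.support_reverse, List.mem_reverse, hPbHsup] at this
    exact hPbsup z this
  -- membership refinement
  have hαmem : ∀ z ∈ α, z = t ∨ CaP z := by
    intro z hz
    have hzs : z ≠ s := fun h => hsα (h ▸ hz)
    rcases hαTa z hz with h | h
    · exact absurd h hzs
    · rcases h with h | h
      · exact Or.inl h
      · exact Or.inr h
  have hβmem : ∀ z ∈ β, z = s ∨ CbP z := by
    intro z hz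
    have hzt : z ≠ t := fun h => htβ (h ▸ hz)
    rcases hβTb z hz with h | h
    · exact Or.inl h
    · rcases h with h | h
      · exact absurd h hzt
      · exact Or.inr h
  have hdisjαβ : ∀ z ∈ α, z ∉ β := by
    intro z hzα hzβ
    rcases hαmem z hzα with rfl | hza
    · rcases hβmem z hzβ with h | h
      · exact hst h.symm
      · exact htB (hCbB _ h)
    · rcases hβmem z hzβ with rfl | h
      · exact hsB (hCaB _ hza)
      · exact hdisj z hza h
  have hCtail : C.support.tail = α ++ β := by
    rw [hCsupp, hPaHcons]
    rfl
  have hCtailnodup : C.support.tail.Nodup := by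
    rw [hCtail, List.nodup_append]
    exact ⟨(List.nodup_cons.mp hαnodup).2, (List.nodup_cons.mp hβnodup).2,
      fun a ha b hb hab => hdisjαβ a ha (by rw [hab]; exact hb)⟩
  -- edges of C
  have hCedges : C.edges = PaH.edges ++ PbH.reverse.edges := Walk.edges_append _ _
  have hPbrevedges : PbH.reverse.edges = PbH.edges.reverse := Walk.edges_reverse _
  have hedgedisj : ∀ e ∈ PaH.edges, e ∉ PbH.reverse.edges := by
    intro e hea heb
    rw [hPbrevedges, List.mem_reverse] at heb
    obtain ⟨⟨p1, p2⟩, rfl⟩ := sym2_exists_pair e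
    have h1a : p1 ∈ PaH.support := PaH.fst_mem_support_of_mem_edges hea
    have h2a : p2 ∈ PaH.support := PaH.snd_mem_support_of_mem_edges hea
    have h1b : p1 ∈ PbH.support := PbH.fst_mem_support_of_mem_edges heb
    have h2b : p2 ∈ PbH.support := PbH.snd_mem_support_of_mem_edges heb
    have hadj : H.Adj p1 p2 := PaH.adj_of_mem_edges hea
    have hkey : ∀ z, z ∈ PaH.support → z ∈ PbH.support → z = s ∨ z = t := by
      intro z h1 h2
      rw [hPaHsup] at h1
      rw [hPbHsup] at h2
      rcases hPasup z h1 with h | h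
      · exact Or.inl h
      rcases h with h | h
      · exact Or.inr h
      rcases hPbsup z h2 with h' | h'
      · exact Or.inl h'
      rcases h' with h' | h'
      · exact Or.inr h'
      · exact absurd h' (fun hh => hdisj z h hh)
    rcases hkey p1 h1a h1b with rfl | rfl <;> rcases hkey p2 h2a h2b with rfl | rfl
    · exact hadj.ne rfl
    · exact hadjst hadj
    · exact hadjst hadj.symm
    · exact hadj.ne rfl
  have hCtrail : C.IsTrail := by
    rw [Walk.isTrail_def, hCedges, List.nodup_append]
    exact ⟨hPaHpath.isTrail.edges_nodup,
      hPbHpath.reverse.isTrail.edges_nodup,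
      fun a ha b hb hab => hedgedisj a ha (by rw [hab]; exact hb)⟩
  have hClen : C.length = PaH.length + PbH.length := by
    rw [hC, Walk.length_append, Walk.length_reverse]
  have hPaHlen : PaH.length = Pa.length := Walk.length_transfer _ _
  have hPbHlen : PbH.length = Pb.length := Walk.length_transfer _ _
  have hC4 : 4 ≤ C.length := by omega
  have hCcyc : C.IsCycle := by
    rw [Walk.isCycle_def]
    refine ⟨hCtrail, ?_, hCtailnodup⟩
    intro hnil
    have : C.length = 0 := by rw [hnil]; rfl
    omega
  -- apply chordality
  obtain ⟨u, x, hu, hx, hadj, hne⟩ := hH C hCcyc hC4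
  have hmemsplit : ∀ z, z ∈ C.support → z ∈ PaH.support ∨ z ∈ PbH.support := by
    intro z hz
    rw [hC, Walk.mem_support_append_iff] at hz
    rcases hz with hz | hz
    · exact Or.inl hz
    · right; rwa [Walk.support_reverse, List.mem_reverse] at hz
  have hchordPa : ∀ {u' x' : V}, u' ∈ Pa.support → x' ∈ Pa.support → H.Adj u' x' →
      s(u', x') ∈ C.edges := by
    intro u' x' hu' hx' hadj'
    have hPaedge : s(u', x') ∈ Pa.edges := by
      refine min_walk_chord Pa.length Pa rfl hPamin hu' hx' ?_
      exact ⟨hadj', hPasup _ hu', hPasup _ hx'⟩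
    rw [hCedges]
    refine List.mem_append_left _ ?_
    rwa [hPaHedge]
  have hchordPb : ∀ {u' x' : V}, u' ∈ Pb.support → x' ∈ Pb.support → H.Adj u' x' →
      s(u', x') ∈ C.edges := by
    intro u' x' hu' hx' hadj'
    have hPbedge : s(u', x') ∈ Pb.edges := by
      refine min_walk_chord Pb.length Pb rfl hPbmin hu' hx' ?_
      exact ⟨hadj', hPbsup _ hu', hPbsup _ hx'⟩
    rw [hCedges]
    refine List.mem_append_right _ ?_
    rw [hPbrevedges, List.mem_reverse, hPbHedge]
    exact hPbedge
  rcases hmemsplit u hu with hua | hub <;> rcases hmemsplit x hx with hxa' | hxb'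
  · exact hne (hchordPa (by rwa [hPaHsup] at hua) (by rwa [hPaHsup] at hxa') hadj)
  · -- u on a-side, x on b-side
    by_cases hu2 : u ∈ PbH.support
    · exact hne (hchordPb (by rwa [hPbHsup] at hu2) (by rwa [hPbHsup] at hxb') hadj)
    by_cases hx2 : x ∈ PaH.support
    · exact hne (hchordPa (by rwa [hPaHsup] at hua) (by rwa [hPaHsup] at hx2) hadj)
    -- genuinely mixed
    have hus : u ≠ s := by
      intro h; subst h; apply hu2; rw [hPbHsup]; exact Pb.start_mem_support
    have hut : u ≠ t := by
      intro h; subst h; apply hu2; rw [hPbHsup]; exact Pb.end_mem_support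
    have hxs : x ≠ s := by
      intro h; subst h; apply hx2; rw [hPaHsup]; exact Pa.start_mem_support
    have hxt : x ≠ t := by
      intro h; subst h; apply hx2; rw [hPaHsup]; exact Pa.end_mem_support
    have hCau : CaP u := by
      rcases hPasup u (by rwa [hPaHsup] at hua) with h | h
      · exact absurd h hus
      rcases h with h | h
      · exact absurd h hut
      · exact h
    have hCbx : CbP x := by
      rcases hPbsup x (by rwa [hPbHsup] at hxb') with h | h
      · exact absurd h hxs
      rcases h with h | h
      · exact absurd h hxt
      · exact h
    exact hdisj x (hclosa u x hCau ⟨hadj, hCaB u hCau, hCbB x hCbx⟩) hCbx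
  · -- u on b-side, x on a-side (symmetric)
    by_cases hu2 : u ∈ PaH.support
    · exact hne (hchordPa (by rwa [hPaHsup] at hu2) (by rwa [hPaHsup] at hxa') hadj)
    by_cases hx2 : x ∈ PbH.support
    · exact hne (hchordPb (by rwa [hPbHsup] at hub) (by rwa [hPbHsup] at hx2) hadj)
    have hus : u ≠ s := by
      intro h; subst h; apply hu2; rw [hPaHsup]; exact Pa.start_mem_support
    have hut : u ≠ t := by
      intro h; subst h; apply hu2; rw [hPaHsup]; exact Pa.end_mem_support
    have hxs : x ≠ s := by
      intro h; subst h; apply hx2; rw [hPbHsup]; exact Pb.start_mem_support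
    have hxt : x ≠ t := by
      intro h; subst h; apply hx2; rw [hPbHsup]; exact Pb.end_mem_support
    have hCbu : CbP u := by
      rcases hPbsup u (by rwa [hPbHsup] at hub) with h | h
      · exact absurd h hus
      rcases h with h | h
      · exact absurd h hut
      · exact h
    have hCax : CaP x := by
      rcases hPasup x (by rwa [hPaHsup] at hxa') with h | h
      · exact absurd h hxs
      rcases h with h | h
      · exact absurd h hxt
      · exact h
    exact hdisj u (hclosa x u hCax ⟨hadj.symm, hCaB x hCax, hCbB u hCbu⟩) hCbu
  · exact hne (hchordPb (by rwa [hPbHsup] at hub) (by rwa [hPbHsup] at hxb') hadj)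

def simplA (H : SimpleGraph V) (A : Finset V) (v : V) : Prop :=
  ∀ x y : V, x ∈ A → y ∈ A → H.Adj v x → H.Adj v y → x ≠ y → H.Adj x y

lemma GD {H : SimpleGraph V} (hH : IsChordal H) :
    ∀ (n : ℕ) (A : Finset V), A.card ≤ n →
      (∀ x y : V, x ∈ A → y ∈ A → x ≠ y → H.Adj x y) ∨
      (∃ v w, v ∈ A ∧ w ∈ A ∧ simplA H A v ∧ simplA H A w ∧ v ≠ w ∧ ¬H.Adj v w) := by
  intro n
  induction n with
  | zero =>
    intro A hA
    left
    intro x y hx _ _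
    rw [Finset.card_eq_zero.mp (Nat.le_antisymm hA (Nat.zero_le _))] at hx
    exact absurd hx (Finset.notMem_empty _)
  | succ n IH =>
    intro A hA
    by_cases hcomp : ∀ x y : V, x ∈ A → y ∈ A → x ≠ y → H.Adj x y
    · exact Or.inl hcomp
    right
    push_neg at hcomp
    obtain ⟨a, b, ha, hb, hab, hnadj⟩ := hcomp
    classical
    set Sep : Finset V → Prop := fun S => S ⊆ A ∧ a ∉ S ∧ b ∉ S ∧
      ¬(Rst H ((A \ S : Finset V) : Set V)).Reachable a b with hSepdef
    have hfull : Sep ((A.erase a).erase b) := by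
      refine ⟨(Finset.erase_subset _ _).trans (Finset.erase_subset _ _), ?_, ?_, ?_⟩
      · intro h
        exact Finset.notMem_erase a A (Finset.mem_of_mem_erase h)
      · exact Finset.notMem_erase b _
      · rintro ⟨w⟩
        cases w with
        | nil => exact hab rfl
        | @cons _ z _ h w' =>
          have hz := h.2.2
          rw [Finset.mem_coe, Finset.mem_sdiff] at hz
          have hzne : z ≠ a := h.1.ne.symm
          have hzb : z = b := by
            by_contra hzb
            exact hz.2 (Finset.mem_erase.mpr ⟨hzb, Finset.mem_erase.mpr ⟨hzne, hz.1⟩⟩)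
          exact hnadj (hzb ▸ h.1)
    have hfullmem : (A.erase a).erase b ∈ (A.powerset).filter Sep := by
      rw [Finset.mem_filter, Finset.mem_powerset]
      exact ⟨(Finset.erase_subset _ _).trans (Finset.erase_subset _ _), hfull⟩
    obtain ⟨S, hSmem, hSmin⟩ :=
      Finset.exists_min_image ((A.powerset).filter Sep) Finset.card ⟨_, hfullmem⟩
    rw [Finset.mem_filter] at hSmem
    obtain ⟨hSsub, haS, hbS, hnreach⟩ := hSmem.2
    set B : Set V := ((A \ S : Finset V) : Set V) with hBdef
    have hmemB : ∀ z, z ∈ B ↔ (z ∈ A ∧ z ∉ S) := by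
      intro z
      rw [hBdef, Finset.mem_coe, Finset.mem_sdiff]
    set CaP : V → Prop := fun z => z ∈ A ∧ z ∉ S ∧ (Rst H B).Reachable a z with hCaPdef
    set CbP : V → Prop := fun z => z ∈ A ∧ z ∉ S ∧ (Rst H B).Reachable b z with hCbPdef
    have hCaa : CaP a := ⟨ha, haS, Reachable.refl a⟩
    have hCbb : CbP b := ⟨hb, hbS, Reachable.refl b⟩
    have hCaB : ∀ z, CaP z → z ∈ B := fun z hz => (hmemB z).mpr ⟨hz.1, hz.2.1⟩
    have hCbB : ∀ z, CbP z → z ∈ B := fun z hz => (hmemB z).mpr ⟨hz.1, hz.2.1⟩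
    have hclosa : ∀ z y, CaP z → (Rst H B).Adj z y → CaP y := by
      intro z y hz hzy
      have hyB := (hmemB y).mp hzy.2.2
      exact ⟨hyB.1, hyB.2, hz.2.2.trans hzy.reachable⟩
    have hclosb : ∀ z y, CbP z → (Rst H B).Adj z y → CbP y := by
      intro z y hz hzy
      have hyB := (hmemB y).mp hzy.2.2
      exact ⟨hyB.1, hyB.2, hz.2.2.trans hzy.reachable⟩
    have hdisjC : ∀ z, CaP z → CbP z → False := fun z hza hzb =>
      hnreach (hza.2.2.trans hzb.2.2.symm)
    have hnbr : ∀ s ∈ S, (∃ z, CaP z ∧ H.Adj s z) ∧ (∃ z, CbP z ∧ H.Adj s z) := by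
      intro s hs
      have hcard : (S.erase s).card < S.card := Finset.card_erase_lt_of_mem hs
      have hnotSep : ¬Sep (S.erase s) := by
        intro hSep
        have hmem' : S.erase s ∈ (A.powerset).filter Sep := by
          rw [Finset.mem_filter, Finset.mem_powerset]
          exact ⟨((Finset.erase_subset _ _).trans hSsub), hSep⟩
        have := hSmin _ hmem'
        omega
      have hreach' : (Rst H ((A \ S.erase s : Finset V) : Set V)).Reachable a b := by
        by_contra hnr
        exact hnotSep ⟨(Finset.erase_subset _ _).trans hSsub,
          fun h => haS (Finset.mem_of_mem_erase h),
          fun h => hbS (Finset.mem_of_mem_erase h), hnr⟩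
      obtain ⟨w0, hw0path, -⟩ := exists_min_walk hreach'
      constructor
      · obtain ⟨z, h1, h2, h3, h4⟩ := side_neighbor hs ha hnreach w0 hw0path haS
        exact ⟨z, ⟨h1, h2, h3⟩, h4⟩
      · obtain ⟨z, h1, h2, h3, h4⟩ :=
          side_neighbor hs hb (fun h => hnreach h.symm) w0.reverse hw0path.reverse hbS
        exact ⟨z, ⟨h1, h2, h3⟩, h4⟩
    have hclq : ∀ s ∈ S, ∀ t ∈ S, s ≠ t → H.Adj s t := by
      intro s hs t ht hst
      by_contra hadjst
      obtain ⟨⟨xa, hxa, hsxa⟩, ⟨xb, hxb, hsxb⟩⟩ := hnbr s hs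
      obtain ⟨⟨ya, hya, htya⟩, ⟨yb, hyb, htyb⟩⟩ := hnbr t ht
      refine sep_clique hH hst hadjst hCaB hCbB hclosa hclosb hdisjC ?_ ?_
        hxa hsxa hya htya hxb hsxb hyb htyb ?_ ?_
      · intro hsB'
        exact ((hmemB s).mp hsB').2 hs
      · intro htB'
        exact ((hmemB t).mp htB').2 ht
      · exact hxa.2.2.symm.trans hya.2.2
      · exact hxb.2.2.symm.trans hyb.2.2
    have hside : ∀ (c : V) (CP : V → Prop), CP c → c ∈ A →
        (∀ z y, CP z → (Rst H B).Adj z y → CP y) →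
        (∀ z, CP z → z ∈ B) →
        (∀ z, CP z → z ∉ S) →
        (∀ z, z ∈ S → CP z → False) →
        (b ∉ A → False) →
        (∀ z, CP z → z ≠ b) →
        ∃ p, CP p ∧ simplA H A p := by
      intro c CP hc hcA hclos hCB hCnS hSno hbA hCnotb
      set A1 : Finset V := A.filter (fun z => CP z ∨ z ∈ S) with hA1
      have hA1sub : A1 ⊆ A := Finset.filter_subset _ _
      have hbA1 : b ∉ A1 := by
        rw [hA1, Finset.mem_filter]
        rintro ⟨-, h | h⟩
        · exact hCnotb b h rfl
        · exact hbS h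
      have hcard1 : A1.card ≤ n := by
        have h1 : A1 ⊆ A.erase b := fun z hz =>
          Finset.mem_erase.mpr ⟨fun h => hbA1 (h ▸ hz), hA1sub hz⟩
        have h2 := Finset.card_le_card h1
        have h3 := Finset.card_erase_of_mem hb
        omega
      have hclosureA1 : ∀ p, CP p → ∀ x, x ∈ A → H.Adj p x → x ∈ A1 := by
        intro p hp x hx hpx
        rw [hA1, Finset.mem_filter]
        refine ⟨hx, ?_⟩
        by_cases hxS : x ∈ S
        · exact Or.inr hxS
        · exact Or.inl (hclos p x hp ⟨hpx, hCB p hp, (hmemB x).mpr ⟨hx, hxS⟩⟩)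
      have promote : ∀ p, CP p → simplA H A1 p → simplA H A p := by
        intro p hp hsp x y hx hy hpx hpy hxy
        exact hsp x y (hclosureA1 p hp x hx hpx) (hclosureA1 p hp y hy hpy) hpx hpy hxy
      rcases IH A1 hcard1 with hcomp1 | ⟨v, w, hv, hw, hsv, hsw, hvw, hnadjvw⟩
      · refine ⟨c, hc, ?_⟩
        intro x y hx hy hax hay hxy
        exact hcomp1 x y (hclosureA1 c hc x hx hax) (hclosureA1 c hc y hy hay) hxy
      · have hor : CP v ∨ CP w := by
          have hv' := Finset.mem_filter.mp hv
          have hw' := Finset.mem_filter.mp hw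
          rcases hv'.2 with h | h
          · exact Or.inl h
          rcases hw'.2 with h' | h'
          · exact Or.inr h'
          · exact absurd (hclq v h w h' hvw) hnadjvw
        rcases hor with h | h
        · exact ⟨v, h, promote v h hsv⟩
        · exact ⟨w, h, promote w h hsw⟩
    obtain ⟨p, hpCa, hpsimp⟩ := hside a CaP hCaa ha hclosa hCaB
      (fun z hz => hz.2.1) (fun z hzS hzC => hzC.2.1 hzS) (fun h => h hb)
      (fun z hz hzb => hdisjC z hz (hzb ▸ hCbb))
    -- For the b-side we need the analogous statement with the roles of a and b swapped;
    -- note `hside` is stated with the fixed vertex b excluded, so we need a symmetric copy.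
    have hsideb : ∃ q, CbP q ∧ simplA H A q := by
      set A2 : Finset V := A.filter (fun z => CbP z ∨ z ∈ S) with hA2
      have hA2sub : A2 ⊆ A := Finset.filter_subset _ _
      have haA2 : a ∉ A2 := by
        rw [hA2, Finset.mem_filter]
        rintro ⟨-, h | h⟩
        · exact hdisjC a hCaa h
        · exact haS h
      have hcard2 : A2.card ≤ n := by
        have h1 : A2 ⊆ A.erase a := fun z hz =>
          Finset.mem_erase.mpr ⟨fun h => haA2 (h ▸ hz), hA2sub hz⟩
        have h2 := Finset.card_le_card h1
        have h3 := Finset.card_erase_of_mem ha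
        omega
      have hclosureA2 : ∀ p, CbP p → ∀ x, x ∈ A → H.Adj p x → x ∈ A2 := by
        intro p hp x hx hpx
        rw [hA2, Finset.mem_filter]
        refine ⟨hx, ?_⟩
        by_cases hxS : x ∈ S
        · exact Or.inr hxS
        · exact Or.inl (hclosb p x hp ⟨hpx, hCbB p hp, (hmemB x).mpr ⟨hx, hxS⟩⟩)
      have promote : ∀ p, CbP p → simplA H A2 p → simplA H A p := by
        intro p hp hsp x y hx hy hpx hpy hxy
        exact hsp x y (hclosureA2 p hp x hx hpx) (hclosureA2 p hp y hy hpy) hpx hpy hxy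
      rcases IH A2 hcard2 with hcomp2 | ⟨v, w, hv, hw, hsv, hsw, hvw, hnadjvw⟩
      · refine ⟨b, hCbb, ?_⟩
        intro x y hx hy hax hay hxy
        exact hcomp2 x y (hclosureA2 b hCbb x hx hax) (hclosureA2 b hCbb y hy hay) hxy
      · have hor : CbP v ∨ CbP w := by
          have hv' := Finset.mem_filter.mp hv
          have hw' := Finset.mem_filter.mp hw
          rcases hv'.2 with h | h
          · exact Or.inl h
          rcases hw'.2 with h' | h'
          · exact Or.inr h'
          · exact absurd (hclq v h w h' hvw) hnadjvw
        rcases hor with h | h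
        · exact ⟨v, h, promote v h hsv⟩
        · exact ⟨w, h, promote w h hsw⟩
    obtain ⟨q, hqCb, hqsimp⟩ := hsideb
    refine ⟨p, q, hpCa.1, hqCb.1, hpsimp, hqsimp, ?_, ?_⟩
    · intro h
      exact hdisjC p hpCa (h ▸ hqCb)
    · intro hadj
      exact hdisjC q (hclosa p q hpCa ⟨hadj, hCaB p hpCa, hCbB q hqCb⟩) hqCb

lemma exists_simplicial [Fintype V] {H : SimpleGraph V} (hH : IsChordal H)
    {p₀ q₀ : V} (h0 : H.Adj p₀ q₀) :
    ∃ v x, H.Adj v x ∧ ∀ y z : V, H.Adj v y → H.Adj v z → y ≠ z → H.Adj y z := by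
  classical
  set A : Finset V := Finset.univ.filter (fun z => H.Reachable p₀ z) with hA
  have hmemA : ∀ z, z ∈ A ↔ H.Reachable p₀ z := by
    intro z
    rw [hA, Finset.mem_filter]
    simp
  have hclA : ∀ u y, u ∈ A → H.Adj u y → y ∈ A := fun u y hu huy =>
    (hmemA y).mpr (((hmemA u).mp hu).trans huy.reachable)
  have hp0A : p₀ ∈ A := (hmemA _).mpr (Reachable.refl _)
  rcases GD hH A.card A le_rfl with hcomp | ⟨v, w, hv, hw, hsv, _, hvw, hnadj⟩
  · exact ⟨p₀, q₀, h0, fun y z hy hz hyz =>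
      hcomp y z (hclA _ _ hp0A hy) (hclA _ _ hp0A hz) hyz⟩
  · have hsimpv : ∀ y z : V, H.Adj v y → H.Adj v z → y ≠ z → H.Adj y z := by
      intro y z hy hz hyz
      exact hsv y z (hclA v y hv hy) (hclA v z hv hz) hy hz hyz
    by_cases hvp : v = p₀
    · exact ⟨v, q₀, hvp ▸ h0, hsimpv⟩
    · obtain ⟨wk⟩ := (hmemA v).mp hv
      cases hr : wk.reverse with
      | nil => exact absurd rfl hvp
      | @cons _ z _ hadj wk2 => exact ⟨v, z, hadj, hsimpv⟩

end Dirac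

section Main

lemma triangle_of_cycle_edge {H : SimpleGraph V} (hH : IsChordal H) :
    ∀ (L : ℕ) {c p q : V} (D : H.Walk c c), D.length = L → D.IsCycle → s(p, q) ∈ D.edges →
      ∃ r, H.Adj p r ∧ H.Adj r q := by
  intro L
  induction L using Nat.strong_induction_on with
  | _ L IH =>
    intro c p q D hL hD he
    rcases Nat.lt_or_ge D.length 4 with h4 | h4
    · have h3 : D.length = 3 := le_antisymm (by omega) hD.three_le_length
      obtain ⟨r, _, h1, h2⟩ := triangle_of_length_three D h3 he
      exact ⟨r, h1, h2⟩
    · obtain ⟨u, x, hu, hx, hadj, hne⟩ := hH D hD h4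
      obtain ⟨D', hD', he', hlt, _⟩ := cycle_split hD hadj hu hx hne he
      exact IH D'.length (by omega) D' rfl hD' he'

lemma tprop {H : SimpleGraph V} (hH : IsChordal H) (hbridge : ∀ e : Sym2 V, ¬H.IsBridge e) :
    ∀ ⦃u v : V⦄, H.Adj u v → ∃ w, H.Adj u w ∧ H.Adj v w := by
  intro u v huv
  have hb := hbridge s(u, v)
  rw [SimpleGraph.isBridge_iff_forall_cycle_notMem ((SimpleGraph.mem_edgeSet H).mpr huv)] at hb
  push_neg at hb
  obtain ⟨c, D, hD, he⟩ := hb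
  obtain ⟨r, h1, h2⟩ := triangle_of_cycle_edge hH D.length D rfl hD he
  exact ⟨r, h1, h2.symm⟩

lemma main_empty {H : SimpleGraph V} (hE : H.edgeSet = ∅) :
    ∃ o : H.edgeSet → V × V,
      (∀ e : H.edgeSet, (e : Sym2 V) = s((o e).1, (o e).2)) ∧
      ∀ φ : H.edgeSet → ZMod 4,
        IsDualFlow 4 (fun e => (o e).1) (fun e => (o e).2) φ →
        (∀ e, φ e = 0 ∨ φ e = 3) → ∀ e, φ e = 0 := by
  refine ⟨defaultOrient H, defaultOrient_spec H, ?_⟩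
  intro φ _ _ e
  exact absurd e.2 (Set.eq_empty_iff_forall_notMem.mp hE _)

lemma main [Fintype V] : ∀ (N : ℕ) (H : SimpleGraph V), H.edgeSet.ncard ≤ N → IsChordal H →
    (∀ ⦃u v : V⦄, H.Adj u v → ∃ w, H.Adj u w ∧ H.Adj v w) →
    ∃ o : H.edgeSet → V × V,
      (∀ e : H.edgeSet, (e : Sym2 V) = s((o e).1, (o e).2)) ∧
      ∀ φ : H.edgeSet → ZMod 4,
        IsDualFlow 4 (fun e => (o e).1) (fun e => (o e).2) φ →
        (∀ e, φ e = 0 ∨ φ e = 3) → ∀ e, φ e = 0 := by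
  intro N
  induction N with
  | zero =>
    intro H hcard _ _
    refine main_empty ?_
    rw [← Set.ncard_eq_zero (Set.toFinite _)]
    omega
  | succ N IH =>
    intro H hcard hchord hT
    classical
    by_cases hE : H.edgeSet = ∅
    · exact main_empty hE
    obtain ⟨e₀, he₀⟩ := Set.nonempty_iff_ne_empty.mpr hE
    obtain ⟨⟨p₀, q₀⟩, hpq⟩ := sym2_exists_pair e₀
    rw [hpq] at he₀
    have h0 : H.Adj p₀ q₀ := (SimpleGraph.mem_edgeSet H).mp he₀
    obtain ⟨v, a, hva, hsimp⟩ := exists_simplicial hchord h0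
    obtain ⟨b, hvb, hab⟩ := hT hva
    have hbnea : b ≠ a := hab.ne'
    have hanev : a ≠ v := hva.ne'
    have hbnev : b ≠ v := hvb.ne'
    have hvnea : v ≠ a := hva.ne
    have hvneb : v ≠ b := hvb.ne
    by_cases hcond : ∀ x y, H.Adj v x → H.Adj v y → x ≠ y →
        ∃ w, w ≠ v ∧ H.Adj x w ∧ H.Adj y w
    · -- Branch 1 : delete the star of v
      set sdel : Set (Sym2 V) := {e | v ∈ e} with hsdel
      set H' := H.deleteEdges sdel with hH'
      have hH'le : H' ≤ H := SimpleGraph.deleteEdges_le sdel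
      have hH'adj : ∀ {x y : V}, H'.Adj x y ↔ H.Adj x y ∧ x ≠ v ∧ y ≠ v := by
        intro x y
        rw [hH', SimpleGraph.deleteEdges_adj]
        simp only [hsdel, Set.mem_setOf_eq, Sym2.mem_iff]
        constructor
        · rintro ⟨h1, h2⟩
          push_neg at h2
          exact ⟨h1, fun h => h2.1 h.symm, fun h => h2.2 h.symm⟩
        · rintro ⟨h1, h2, h3⟩
          exact ⟨h1, fun h => h.elim (fun h => h2 h.symm) (fun h => h3 h.symm)⟩
      have hnoadjv : ∀ y, ¬H'.Adj v y := fun y h => ((hH'adj.mp h).2.1) rfl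
      have hvnotsupp : ∀ {c : V} (w : H'.Walk c c), w.IsCycle → v ∉ w.support := by
        intro c w hw hv
        have hnn : ¬(w.rotate _ hv).Nil := by
          have h3 := (hw.rotate hv).three_le_length
          rw [Walk.nil_iff_length_eq]
          omega
        exact hnoadjv _ (Walk.adj_snd hnn)
      have hchord' : IsChordal H' := by
        intro c w hw hlen
        obtain ⟨wH, hwH, hsupp, hedges, hlength⟩ := cycle_transfer hH'le w hw
        obtain ⟨u, x, hu, hx, hadj2, hne2⟩ := hchord wH hwH (by rwa [hlength])
        rw [hsupp] at hu hx
        rw [hedges] at hne2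
        have hvs := hvnotsupp w hw
        refine ⟨u, x, hu, hx, ?_, hne2⟩
        rw [hH'adj]
        exact ⟨hadj2, fun h => hvs (h ▸ hu), fun h => hvs (h ▸ hx)⟩
      have hT' : ∀ ⦃x y : V⦄, H'.Adj x y → ∃ w, H'.Adj x w ∧ H'.Adj y w := by
        intro x y hxy
        obtain ⟨hxyH, hxv, hyv⟩ := hH'adj.mp hxy
        obtain ⟨w, hxw, hyw⟩ := hT hxyH
        by_cases hwv : w = v
        · subst hwv
          obtain ⟨w', hw'v, hxw', hyw'⟩ := hcond x y hxw.symm hyw.symm hxyH.ne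
          exact ⟨w', hH'adj.mpr ⟨hxw', hxv, hw'v⟩, hH'adj.mpr ⟨hyw', hyv, hw'v⟩⟩
        · exact ⟨w, hH'adj.mpr ⟨hxw, hxv, hwv⟩, hH'adj.mpr ⟨hyw, hyv, hwv⟩⟩
      have hcard' : H'.edgeSet.ncard ≤ N := by
        have hsub : H'.edgeSet ⊂ H.edgeSet := by
          rw [hH', SimpleGraph.edgeSet_deleteEdges]
          constructor
          · exact Set.diff_subset
          · intro hsup
            have hmem : s(v, a) ∈ H.edgeSet := (SimpleGraph.mem_edgeSet H).mpr hva
            have h2 := hsup hmem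
            rw [Set.mem_diff] at h2
            exact h2.2 (by rw [hsdel]; exact Sym2.mem_mk_left _ _)
        have := Set.ncard_lt_ncard hsub (Set.toFinite _)
        omega
      obtain ⟨o', hcompat', hrigid'⟩ := IH H' hcard' hchord' hT'
      have hmemH' : ∀ (e : Sym2 V), e ∈ H.edgeSet → v ∉ e → e ∈ H'.edgeSet := by
        intro e he hv
        rw [hH', SimpleGraph.edgeSet_deleteEdges, Set.mem_diff]
        exact ⟨he, hv⟩
      set o : H.edgeSet → V × V := fun e =>
        if h1 : (e : Sym2 V) = s(a, v) then (a, v)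
        else if h2 : v ∈ (e : Sym2 V) then (v, Sym2.Mem.other h2)
        else o' ⟨(e : Sym2 V), hmemH' e e.2 h2⟩ with ho
      have hcompat : ∀ e : H.edgeSet, (e : Sym2 V) = s((o e).1, (o e).2) := by
        intro e
        simp only [ho]
        by_cases h1 : (e : Sym2 V) = s(a, v)
        · rw [dif_pos h1]; exact h1
        rw [dif_neg h1]
        by_cases h2 : v ∈ (e : Sym2 V)
        · rw [dif_pos h2]; exact (Sym2.other_spec h2).symm
        · rw [dif_neg h2]; exact hcompat' ⟨(e : Sym2 V), hmemH' e e.2 h2⟩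
      have hagree : ∀ e' : H'.edgeSet,
          o ⟨(e' : Sym2 V), SimpleGraph.edgeSet_mono hH'le e'.2⟩ = o' e' := by
        intro e'
        have h2e : (e' : Sym2 V) ∈ H.edgeSet \ sdel := by
          rw [← SimpleGraph.edgeSet_deleteEdges]
          exact e'.2
        have hv' : v ∉ (e' : Sym2 V) := h2e.2
        simp only [ho]
        rw [dif_neg (fun h : (e' : Sym2 V) = s(a, v) =>
          hv' (by rw [h]; exact Sym2.mem_mk_right _ _))]
        rw [dif_neg hv']
        all_goals exact congrArg o' (Subtype.ext rfl)
      refine ⟨o, hcompat, ?_⟩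
      intro φ hφ hvals
      have hφ' := dualflow_restrict hH'le hagree hφ
      have hzero' := hrigid' _ hφ' (fun e => hvals _)
      have hzeroH : ∀ {x y : V} (hxy : H.Adj x y), x ≠ v → y ≠ v → φ (eEl hxy) = 0 := by
        intro x y hxy hxv hyv
        have hmem : s(x, y) ∈ H'.edgeSet := hmemH' _ ((SimpleGraph.mem_edgeSet H).mpr hxy) (by
          rw [Sym2.mem_iff]
          rintro (h | h)
          exacts [hxv h.symm, hyv h.symm])
        exact hzero' ⟨s(x, y), hmem⟩
      have hOav : o (eEl hva.symm) = (a, v) := by simp only [ho]; exact dif_pos rfl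
      have hOvx : ∀ {x : V} (hvx : H.Adj v x), x ≠ a → o (eEl hvx) = (v, x) := by
        intro x hvx hxa
        simp only [ho]
        have h1 : (eEl hvx : Sym2 V) ≠ s(a, v) := by
          show s(v, x) ≠ s(a, v)
          intro hxx
          rw [Sym2.eq_iff] at hxx
          rcases hxx with (⟨h1, h2⟩ | ⟨h1, h2⟩)
          · exact hvnea h1
          · exact hxa h2
        rw [dif_neg h1]
        have h2 : v ∈ (eEl hvx : Sym2 V) := Sym2.mem_mk_left _ _
        rw [dif_pos h2]
        have hother : Sym2.Mem.other h2 = x := Sym2.congr_right.mp (Sym2.other_spec h2)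
        rw [hother]
      have hzba : sflow o φ hab.symm = 0 := by
        rw [sflow_eq_zero]
        exact hzeroH hab.symm hbnev hanev
      have hsav : sflow o φ hva.symm = φ (eEl hva.symm) :=
        sflow_eq_of_orient _ (by rw [hOav])
      have hsvb : sflow o φ hvb = φ (eEl hvb) :=
        sflow_eq_of_orient _ (by rw [hOvx hvb hbnea])
      have t1 := triangle_rel hcompat hφ hva.symm hvb hab.symm
      rw [hzba, add_zero, hsav, hsvb] at t1
      obtain ⟨hφav, hφvb⟩ := zsum2 _ _ (hvals _) (hvals _) t1
      have hgen : ∀ {x : V} (hvx : H.Adj v x), x ≠ a → φ (eEl hvx) = 0 := by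
        intro x hvx hxa
        have hax : H.Adj a x := hsimp a x hva hvx (fun h => hxa h.symm)
        have t2 := triangle_rel hcompat hφ hva.symm hvx hax.symm
        have h1 : sflow o φ hva.symm = 0 := by rw [hsav]; exact hφav
        have h2 : sflow o φ hax.symm = 0 := by
          rw [sflow_eq_zero]
          exact hzeroH hax.symm (fun h => hvx.ne h.symm) hanev
        rw [h1, h2, zero_add, add_zero] at t2
        exact (sflow_eq_zero hvx).mp t2
      intro e
      by_cases h2 : v ∈ (e : Sym2 V)
      · have hspec := Sym2.other_spec h2
        have hvx : H.Adj v (Sym2.Mem.other h2) := by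
          rw [← SimpleGraph.mem_edgeSet H, hspec]
          exact e.2
        have h5 : (e : Sym2 V) = s(v, Sym2.Mem.other h2) := hspec.symm
        by_cases hxa : Sym2.Mem.other h2 = a
        · have h6 : (e : Sym2 V) = s(v, a) := by rw [h5, hxa]
          have hee : e = eEl hva.symm := Subtype.ext (h6.trans Sym2.eq_swap)
          rw [hee]; exact hφav
        · have hee : e = eEl hvx := Subtype.ext h5
          rw [hee]; exact hgen hvx hxa
      · exact hzero' ⟨(e : Sym2 V), hmemH' _ e.2 h2⟩
    · -- Branch 2
      push_neg at hcond
      obtain ⟨a2, b2, hva2, hvb2, hne2ab, hclause⟩ := hcond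
      have hab2 : H.Adj a2 b2 := hsimp a2 b2 hva2 hvb2 hne2ab
      have hvnea2 : v ≠ a2 := hva2.ne
      have hvneb2 : v ≠ b2 := hvb2.ne
      have ha2nev : a2 ≠ v := hva2.ne'
      have hb2nev : b2 ≠ v := hvb2.ne'
      have hNv : ∀ x, H.Adj v x → x = a2 ∨ x = b2 := by
        intro x hvx
        by_contra hx
        push_neg at hx
        have hax : H.Adj a2 x := hsimp a2 x hva2 hvx (fun h => hx.1 h.symm)
        have hbx : H.Adj b2 x := hsimp b2 x hvb2 hvx (fun h => hx.2 h.symm)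
        exact hclause x hvx.ne' hax hbx
      set sdel : Set (Sym2 V) := {e | v ∈ e ∨ e = s(a2, b2)} with hsdel
      set H' := H.deleteEdges sdel with hH'
      have hH'le : H' ≤ H := SimpleGraph.deleteEdges_le sdel
      have hH'adj : ∀ {x y : V},
          H'.Adj x y ↔ H.Adj x y ∧ x ≠ v ∧ y ≠ v ∧ s(x, y) ≠ s(a2, b2) := by
        intro x y
        rw [hH', SimpleGraph.deleteEdges_adj]
        simp only [hsdel, Set.mem_setOf_eq, Sym2.mem_iff]
        constructor
        · rintro ⟨h1, h2⟩
          push_neg at h2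
          exact ⟨h1, fun h => h2.1.1 h.symm, fun h => h2.1.2 h.symm, h2.2⟩
        · rintro ⟨h1, h2, h3, h4⟩
          refine ⟨h1, ?_⟩
          rintro (h | h)
          · exact h.elim (fun h => h2 h.symm) (fun h => h3 h.symm)
          · exact h4 h
      have hnoadjv : ∀ y, ¬H'.Adj v y := fun y h => ((hH'adj.mp h).2.1) rfl
      have hvnotsupp : ∀ {c : V} (w : H'.Walk c c), w.IsCycle → v ∉ w.support := by
        intro c w hw hv
        have hnn : ¬(w.rotate _ hv).Nil := by
          have h3 := (hw.rotate hv).three_le_length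
          rw [Walk.nil_iff_length_eq]
          omega
        exact hnoadjv _ (Walk.adj_snd hnn)
      have hCyc : ∀ (L : ℕ) {c : V} (D : H.Walk c c), D.length = L → D.IsCycle →
          s(a2, b2) ∈ D.edges → v ∈ D.support := by
        intro L
        induction L using Nat.strong_induction_on with
        | _ L IHL =>
          intro c D hL hD he
          rcases Nat.lt_or_ge D.length 4 with h4 | h4
          · have h3 : D.length = 3 := le_antisymm (by omega) hD.three_le_length
            obtain ⟨r, hrsupp, h1, h2⟩ := triangle_of_length_three D h3 he
            by_cases hrv : r = v
            · exact hrv ▸ hrsupp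
            · exact absurd h2.symm (hclause r hrv h1)
          · obtain ⟨u, x, hu, hx, hadj2, hne2⟩ := hchord D hD h4
            obtain ⟨D', hD', he', hlt, hsub⟩ := cycle_split hD hadj2 hu hx hne2 he
            exact hsub v (IHL D'.length (by omega) D' rfl hD' he')
      have hchord' : IsChordal H' := by
        intro c w hw hlen
        obtain ⟨wH, hwH, hsupp, hedges, hlength⟩ := cycle_transfer hH'le w hw
        obtain ⟨u, x, hu, hx, hadj2, hne2⟩ := hchord wH hwH (by rwa [hlength])
        rw [hsupp] at hu hx
        rw [hedges] at hne2
        have hvs := hvnotsupp w hw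
        have hune : u ≠ v := fun h => hvs (h ▸ hu)
        have hxne : x ≠ v := fun h => hvs (h ▸ hx)
        by_cases hux : s(u, x) = s(a2, b2)
        · exfalso
          have ha2s : a2 ∈ w.support ∧ b2 ∈ w.support := by
            rcases Sym2.eq_iff.mp hux with ⟨h1, h2⟩ | ⟨h1, h2⟩
            · exact ⟨h1 ▸ hu, h2 ▸ hx⟩
            · exact ⟨h2 ▸ hx, h1 ▸ hu⟩
          have ha2H : a2 ∈ wH.support := by rw [hsupp]; exact ha2s.1
          have hRc : (wH.rotate _ ha2H).IsCycle := hwH.rotate ha2H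
          have hb2R : b2 ∈ (wH.rotate _ ha2H).support := by
            rw [Walk.rotate, Walk.mem_support_append_iff]
            have hmem : b2 ∈ wH.support := by rw [hsupp]; exact ha2s.2
            rw [← wH.take_spec ha2H, Walk.mem_support_append_iff] at hmem
            tauto
          have hP2path : ((wH.rotate _ ha2H).dropUntil b2 hb2R).IsPath :=
            (paths_of_split hRc hb2R hne2ab.symm).2
          have hP2edges : ∀ f ∈ ((wH.rotate _ ha2H).dropUntil b2 hb2R).edges, f ∈ wH.edges := by
            intro f hf
            exact ((wH.rotate_edges _ ha2H).mem_iff).mp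
              ((wH.rotate _ ha2H).edges_dropUntil_subset hb2R hf)
          have hP2supp : ∀ z ∈ ((wH.rotate _ ha2H).dropUntil b2 hb2R).support,
              z ∈ wH.support := by
            intro z hz
            have hzR := (wH.rotate _ ha2H).support_dropUntil_subset hb2R hz
            rw [Walk.rotate, Walk.mem_support_append_iff] at hzR
            rw [← wH.take_spec ha2H, Walk.mem_support_append_iff]
            tauto
          have hDD : (Walk.cons hab2 ((wH.rotate _ ha2H).dropUntil b2 hb2R)).IsCycle := by
            rw [Walk.cons_isCycle_iff]
            refine ⟨hP2path, ?_⟩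
            intro hmem
            have h1 : s(a2, b2) ∈ w.edges := by rw [← hedges]; exact hP2edges _ hmem
            have h2 := w.edges_subset_edgeSet h1
            rw [hH', SimpleGraph.edgeSet_deleteEdges, Set.mem_diff] at h2
            exact h2.2 (Or.inr rfl)
          have hmemD : s(a2, b2) ∈ (Walk.cons hab2 ((wH.rotate _ ha2H).dropUntil b2 hb2R)).edges := by
            rw [Walk.edges_cons]
            exact List.mem_cons_self
          have hvD := hCyc _ (Walk.cons hab2 ((wH.rotate _ ha2H).dropUntil b2 hb2R)) rfl hDD hmemD
          rw [Walk.support_cons] at hvD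
          rcases List.mem_cons.mp hvD with h | h
          · exact hvnea2 h
          · exact hvs (by rw [← hsupp]; exact hP2supp v h)
        · refine ⟨u, x, hu, hx, ?_, hne2⟩
          rw [hH'adj]
          exact ⟨hadj2, hune, hxne, hux⟩
      have hT' : ∀ ⦃x y : V⦄, H'.Adj x y → ∃ w, H'.Adj x w ∧ H'.Adj y w := by
        intro x y hxy
        obtain ⟨hxyH, hxv, hyv, hxyab⟩ := hH'adj.mp hxy
        obtain ⟨w, hxw, hyw⟩ := hT hxyH
        by_cases hwv : w = v
        · subst hwv
          exfalso
          rcases hNv x hxw.symm with rfl | rfl <;> rcases hNv y hyw.symm with h | h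
          · exact hxyH.ne h.symm
          · exact hxyab (by rw [h])
          · exact hxyab (by rw [h]; exact Sym2.eq_swap)
          · exact hxyH.ne h.symm
        · by_cases hxwab : s(x, w) = s(a2, b2)
          · exfalso
            rcases Sym2.eq_iff.mp hxwab with ⟨rfl, rfl⟩ | ⟨rfl, rfl⟩
            · exact hclause y hyv hxyH hyw.symm
            · exact hclause y hyv hyw.symm hxyH
          by_cases hywab : s(y, w) = s(a2, b2)
          · exfalso
            rcases Sym2.eq_iff.mp hywab with ⟨rfl, rfl⟩ | ⟨rfl, rfl⟩
            · exact hclause x hxv hxyH.symm hxw.symm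
            · exact hclause x hxv hxw.symm hxyH.symm
          · exact ⟨w, hH'adj.mpr ⟨hxw, hxv, hwv, hxwab⟩, hH'adj.mpr ⟨hyw, hyv, hwv, hywab⟩⟩
      have hcard' : H'.edgeSet.ncard ≤ N := by
        have hsub : H'.edgeSet ⊂ H.edgeSet := by
          rw [hH', SimpleGraph.edgeSet_deleteEdges]
          constructor
          · exact Set.diff_subset
          · intro hsup
            have hmem : s(v, a2) ∈ H.edgeSet := (SimpleGraph.mem_edgeSet H).mpr hva2
            have h2 := hsup hmem
            rw [Set.mem_diff] at h2
            exact h2.2 (Or.inl (Sym2.mem_mk_left _ _))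
        have := Set.ncard_lt_ncard hsub (Set.toFinite _)
        omega
      obtain ⟨o', hcompat', hrigid'⟩ := IH H' hcard' hchord' hT'
      have hmemH' : ∀ (e : Sym2 V), e ∈ H.edgeSet → v ∉ e → e ≠ s(a2, b2) →
          e ∈ H'.edgeSet := by
        intro e he hv hab'
        rw [hH', SimpleGraph.edgeSet_deleteEdges, Set.mem_diff]
        refine ⟨he, ?_⟩
        rintro (h | h)
        · exact hv h
        · exact hab' h
      set o : H.edgeSet → V × V := fun e =>
        if h1 : (e : Sym2 V) = s(a2, v) then (a2, v)
        else if h2 : (e : Sym2 V) = s(a2, b2) then (b2, a2)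
        else if h3 : v ∈ (e : Sym2 V) then (v, Sym2.Mem.other h3)
        else o' ⟨(e : Sym2 V), hmemH' e e.2 h3 h2⟩ with ho
      have hcompat : ∀ e : H.edgeSet, (e : Sym2 V) = s((o e).1, (o e).2) := by
        intro e
        simp only [ho]
        by_cases h1 : (e : Sym2 V) = s(a2, v)
        · rw [dif_pos h1]; exact h1
        rw [dif_neg h1]
        by_cases h2 : (e : Sym2 V) = s(a2, b2)
        · rw [dif_pos h2]
          exact h2.trans Sym2.eq_swap
        rw [dif_neg h2]
        by_cases h3 : v ∈ (e : Sym2 V)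
        · rw [dif_pos h3]; exact (Sym2.other_spec h3).symm
        · rw [dif_neg h3]; exact hcompat' ⟨(e : Sym2 V), hmemH' e e.2 h3 h2⟩
      have hagree : ∀ e' : H'.edgeSet,
          o ⟨(e' : Sym2 V), SimpleGraph.edgeSet_mono hH'le e'.2⟩ = o' e' := by
        intro e'
        have h2' : (e' : Sym2 V) ∈ H.edgeSet \ sdel := by
          rw [← SimpleGraph.edgeSet_deleteEdges]
          exact e'.2
        have hv' : v ∉ (e' : Sym2 V) := fun h => h2'.2 (Or.inl h)
        have hne' : (e' : Sym2 V) ≠ s(a2, b2) := fun h => h2'.2 (Or.inr h)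
        simp only [ho]
        rw [dif_neg (fun h : (e' : Sym2 V) = s(a2, v) =>
          hv' (by rw [h]; exact Sym2.mem_mk_right _ _))]
        rw [dif_neg hne']
        rw [dif_neg hv']
        all_goals exact congrArg o' (Subtype.ext rfl)
      refine ⟨o, hcompat, ?_⟩
      intro φ hφ hvals
      have hφ' := dualflow_restrict hH'le hagree hφ
      have hzero' := hrigid' _ hφ' (fun e => hvals _)
      have hOav : o (eEl hva2.symm) = (a2, v) := by simp only [ho]; exact dif_pos rfl
      have hOba : o (eEl hab2.symm) = (b2, a2) := by
        simp only [ho]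
        have h1 : (eEl hab2.symm : Sym2 V) ≠ s(a2, v) := by
          show s(b2, a2) ≠ s(a2, v)
          intro hxx
          rw [Sym2.eq_iff] at hxx
          rcases hxx with (⟨h1, h2⟩ | ⟨h1, h2⟩)
          · exact hne2ab h1.symm
          · exact hb2nev h1
        rw [dif_neg h1]
        have h2 : (eEl hab2.symm : Sym2 V) = s(a2, b2) := Sym2.eq_swap
        rw [dif_pos h2]
      have hOvb : o (eEl hvb2) = (v, b2) := by
        simp only [ho]
        have h1 : (eEl hvb2 : Sym2 V) ≠ s(a2, v) := by
          show s(v, b2) ≠ s(a2, v)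
          intro hxx
          rw [Sym2.eq_iff] at hxx
          rcases hxx with (⟨h1, h2⟩ | ⟨h1, h2⟩)
          · exact hvnea2 h1
          · exact hne2ab h2.symm
        rw [dif_neg h1]
        have h2 : (eEl hvb2 : Sym2 V) ≠ s(a2, b2) := by
          show s(v, b2) ≠ s(a2, b2)
          intro hxx
          rw [Sym2.eq_iff] at hxx
          rcases hxx with (⟨h1, h2⟩ | ⟨h1, h2⟩)
          · exact hvnea2 h1
          · exact hvneb2 h1
        rw [dif_neg h2]
        have h3 : v ∈ (eEl hvb2 : Sym2 V) := Sym2.mem_mk_left _ _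
        rw [dif_pos h3]
        have hother : Sym2.Mem.other h3 = b2 := Sym2.congr_right.mp (Sym2.other_spec h3)
        rw [hother]
      have t1 := triangle_rel hcompat hφ hva2.symm hvb2 hab2.symm
      have hsav : sflow o φ hva2.symm = φ (eEl hva2.symm) :=
        sflow_eq_of_orient _ (by rw [hOav])
      have hsvb : sflow o φ hvb2 = φ (eEl hvb2) :=
        sflow_eq_of_orient _ (by rw [hOvb])
      have hsba : sflow o φ hab2.symm = φ (eEl hab2.symm) :=
        sflow_eq_of_orient _ (by rw [hOba])
      rw [hsav, hsvb, hsba] at t1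
      obtain ⟨hφav, hφvb, hφba⟩ := zsum3 _ _ _ (hvals _) (hvals _) (hvals _) t1
      intro e
      by_cases h1 : (e : Sym2 V) = s(a2, v)
      · have hee : e = eEl hva2.symm := Subtype.ext h1
        rw [hee]; exact hφav
      by_cases h2 : (e : Sym2 V) = s(a2, b2)
      · have hee : e = eEl hab2.symm := Subtype.ext (h2.trans Sym2.eq_swap)
        rw [hee]; exact hφba
      by_cases h3 : v ∈ (e : Sym2 V)
      · have hspec := Sym2.other_spec h3
        have hvx : H.Adj v (Sym2.Mem.other h3) := by
          rw [← SimpleGraph.mem_edgeSet H, hspec]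
          exact e.2
        have h5 : (e : Sym2 V) = s(v, Sym2.Mem.other h3) := hspec.symm
        rcases hNv _ hvx with hxa | hxb
        · exfalso
          apply h1
          rw [h5, hxa]
          exact Sym2.eq_swap
        · have hee : e = eEl hvb2 := Subtype.ext (by rw [h5, hxb]; rfl)
          rw [hee]; exact hφvb
      · exact hzero' ⟨(e : Sym2 V), hmemH' _ e.2 h3 h2⟩

end Main

end ChordalRigid


/-- Every bridgeless chordal graph has an orientation on which the only dual 4-flow
taking values in `{0, 3}` is the identically zero map. -/
theorem bridgeless_chordal_orientation_rigid {V : Type} [Fintype V]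
    (G : SimpleGraph V)
    (hbridge : ∀ e : Sym2 V, ¬ G.IsBridge e) (hchordal : IsChordal G) :
    ∃ o : G.edgeSet → V × V,
      (∀ e : G.edgeSet, (e : Sym2 V) = s((o e).1, (o e).2)) ∧
      ∀ φ : G.edgeSet → ZMod 4,
        IsDualFlow 4 (fun e => (o e).1) (fun e => (o e).2) φ →
        (∀ e, φ e = 0 ∨ φ e = 3) →
        ∀ e, φ e = 0 := by
  exact ChordalRigid.main G.edgeSet.ncard G le_rfl hchordal
    (ChordalRigid.tprop hchordal hbridge)
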